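/- (Numerical form of Proposition 4.6.) Let n ≥ 1 and 0 ≤ k ≤ n be integers, let d and m be integers, and let D = (d; m+1, ..., m+1, m, ..., m) ∈ ℤ^{1+n} be the balanced class whose first k multiplicities equal m+1 and whose remaining n−k multiplicities equal m. Suppose χ(D) ≥ 1 and that there exists a real number t with t² > n such that 2(A_t · D) = A_t · K. Then ℓ := min(k, n−k) satisfies ℓ < (1/2)(n − √((8χ(D)+1)n)). -/
import Mathlib


/-!
Divisor classes on the blowup of `P^2` at `n` very general points are modeled as
pairs `(d, m) : ℤ × (Fin n → ℤ)` representing `dH - ∑ mᵢ Eᵢ`.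
-/

/-- The intersection pairing `D · D' = d d' - ∑ mᵢ mᵢ'`. -/
def pairZ {n : ℕ} (D D' : ℤ × (Fin n → ℤ)) : ℤ :=
  D.1 * D'.1 - ∑ i, D.2 i * D'.2 i

/-- The canonical class `K = -3H + ∑ Eᵢ`, i.e. `(-3; -1, …, -1)`. -/
def KD (n : ℕ) : ℤ × (Fin n → ℤ) := (-3, fun _ => -1)

/-- The Riemann–Roch Euler characteristic `χ(D) = 1 + (1/2) D·(D - K)`. -/
def chi {n : ℕ} (D : ℤ × (Fin n → ℤ)) : ℚ :=
  1 + (pairZ D (D - KD n) : ℚ) / 2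

/-- The real intersection pairing on `ℝ^{1+n}`. -/
def pairR {n : ℕ} (x y : ℝ × (Fin n → ℝ)) : ℝ :=
  x.1 * y.1 - ∑ i, x.2 i * y.2 i

/-- The real vector associated to an integral divisor class. -/
def toR {n : ℕ} (D : ℤ × (Fin n → ℤ)) : ℝ × (Fin n → ℝ) :=
  ((D.1 : ℝ), fun i => (D.2 i : ℝ))

/-- The (real) class `A_t = tH - E = (t; 1, …, 1)`. -/
def At (n : ℕ) (t : ℝ) : ℝ × (Fin n → ℝ) := (t, fun _ => 1)

lemma sum_if_aux {M : Type*} [AddCommMonoid M] (n k : ℕ) (hk : k ≤ n) (a b : M) :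
    ∑ i : Fin n, (if (i : ℕ) < k then a else b) = k • a + (n - k) • b := by
  rw [Fin.sum_univ_eq_sum_range (fun i => if i < k then a else b) n]
  rw [Finset.range_eq_Ico, ← Finset.sum_Ico_consecutive _ (Nat.zero_le k) hk]
  have h1 : ∑ i ∈ Finset.Ico 0 k, (if i < k then a else b) = k • a := by
    rw [Finset.sum_congr rfl fun i hi => if_pos (Finset.mem_Ico.mp hi).2,
      Finset.sum_const, Nat.card_Ico, Nat.sub_zero]
  have h2 : ∑ i ∈ Finset.Ico k n, (if i < k then a else b) = (n - k) • b := by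
    rw [Finset.sum_congr rfl fun i hi => if_neg (Nat.not_lt.mpr (Finset.mem_Ico.mp hi).1),
      Finset.sum_const, Nat.card_Ico]
  rw [h1, h2]

theorem steps_from_equal_lt (n : ℕ) (hn : 1 ≤ n) (k : ℕ) (hk : k ≤ n) (d m : ℤ)
    (D : ℤ × (Fin n → ℤ))
    (hD : D = (d, fun i : Fin n => if (i : ℕ) < k then m + 1 else m))
    (hchi : 1 ≤ chi D)
    (ht : ∃ t : ℝ, (n : ℝ) < t ^ 2 ∧
      2 * pairR (At n t) (toR D) = pairR (At n t) (toR (KD n))) :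
    (min k (n - k) : ℝ) <
      (1 / 2) * ((n : ℝ) - Real.sqrt ((8 * (chi D : ℝ) + 1) * n)) := by
  obtain ⟨t, htn, hEq⟩ := ht
  -- compute chi
  have hp : pairZ D (D - KD n) =
      d * (d + 3) - ((k : ℤ) * ((m + 1) * (m + 2)) + ((n - k : ℕ) : ℤ) * (m * (m + 1))) := by
    subst hD
    simp only [pairZ, KD, Prod.fst_sub, Prod.snd_sub, Pi.sub_apply]
    have hfun : (fun i : Fin n => (if (i : ℕ) < k then m + 1 else m) *
        ((if (i : ℕ) < k then m + 1 else m) - (-1))) =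
        fun i : Fin n => if (i : ℕ) < k then (m + 1) * (m + 2) else m * (m + 1) := by
      funext i; split_ifs <;> ring
    rw [hfun, sum_if_aux n k hk]
    simp only [nsmul_eq_mul]
    ring
  have h8 : 8 * (chi D : ℝ) + 1 =
      (2 * (d : ℝ) + 3) ^ 2 - 4 * ((m : ℝ) + 1) * ((n : ℝ) * m + 2 * k) := by
    have : (chi D : ℝ) = 1 + ((pairZ D (D - KD n) : ℤ) : ℝ) / 2 := by
      simp [chi]
    rw [this, hp]
    push_cast [Nat.cast_sub hk]
    ring
  -- compute the pairings
  have hAD : pairR (At n t) (toR D) = t * (d : ℝ) - ((n : ℝ) * m + k) := by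
    subst hD
    simp only [pairR, At, toR]
    have hfun : (fun i : Fin n => (1 : ℝ) * (((if (i : ℕ) < k then m + 1 else m : ℤ)) : ℝ)) =
        fun i : Fin n => if (i : ℕ) < k then (m : ℝ) + 1 else (m : ℝ) := by
      funext i; split_ifs <;> push_cast <;> ring
    rw [hfun, sum_if_aux n k hk]
    push_cast [Nat.cast_sub hk, nsmul_eq_mul]
    ring
  have hAK : pairR (At n t) (toR (KD n)) = -3 * t + n := by
    simp [pairR, At, toR, KD]; ring
  rw [hAD, hAK] at hEq
  have hS : (2 * (d : ℝ) + 3) * t = (n : ℝ) + 2 * n * m + 2 * k := by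
    linear_combination hEq
  have hdne : ((2 * d + 3 : ℤ) : ℝ) ≠ 0 := Int.cast_ne_zero.mpr (by omega)
  have hpos : (0 : ℝ) < (2 * (d : ℝ) + 3) ^ 2 := by
    have h := hdne; push_cast at h; positivity
  have h2 : (2 * (d : ℝ) + 3) ^ 2 * n < ((n : ℝ) + 2 * n * m + 2 * k) ^ 2 := by
    calc (2 * (d : ℝ) + 3) ^ 2 * n < (2 * (d : ℝ) + 3) ^ 2 * t ^ 2 :=
          mul_lt_mul_of_pos_left htn hpos
      _ = ((2 * (d : ℝ) + 3) * t) ^ 2 := by ring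
      _ = _ := by rw [hS]
  have key : (8 * (chi D : ℝ) + 1) * n < ((n : ℝ) - 2 * k) ^ 2 := by
    rw [h8]
    nlinarith [h2]
  have h9 : (9 : ℝ) ≤ 8 * (chi D : ℝ) + 1 := by
    have : (1 : ℝ) ≤ (chi D : ℝ) := by exact_mod_cast hchi
    linarith
  have hn1 : (1 : ℝ) ≤ (n : ℝ) := by exact_mod_cast hn
  have harg : (0 : ℝ) ≤ (8 * (chi D : ℝ) + 1) * n := by nlinarith
  have hs : Real.sqrt ((8 * (chi D : ℝ) + 1) * n) < |(n : ℝ) - 2 * k| := by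
    rw [← Real.sqrt_sq_eq_abs]
    exact Real.sqrt_lt_sqrt harg key
  have habs : |(n : ℝ) - 2 * k| = (n : ℝ) - 2 * ((min k (n - k) : ℕ) : ℝ) := by
    rcases le_or_gt (2 * k) n with h | h
    · have hL : min k (n - k) = k := by omega
      have h2k : 2 * (k : ℝ) ≤ n := by exact_mod_cast h
      rw [hL, abs_of_nonneg (by linarith)]
    · have hL : min k (n - k) = n - k := by omega
      have h2k : (n : ℝ) < 2 * k := by exact_mod_cast h
      rw [hL, abs_of_nonpos (by linarith), Nat.cast_sub hk]
      ring
  rw [habs] at hs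
  rw [Nat.cast_min, Nat.cast_sub hk] at hs
  linarith
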